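/- Let (S, μ, η) be a monad on C. The assignments ∂ ↦ λ^∂, with λ^∂_A := ⟨S(π₁), S(π₁+π₄)∘∂_{A×A}⟩, and λ ↦ ∂^λ, with ∂^λ_A := π₂∘λ_{A×A}∘S(⟨⟨1_A,0⟩,⟨0,1_A⟩⟩), are mutually inverse bijections between the set of differential combinator transformations on (S, μ, η) and the set of 𝔹-distributive laws for (S, μ, η). -/
import Mathlib


open CategoryTheory CategoryTheory.Limits

universe v u

variable {C : Type u} [Category.{v} C] [Preadditive C] [HasBinaryBiproducts C]

/-- A differential combinator transformation on a monad `S`. -/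
structure DiffCombTrans (S : Monad C) where
  d : ∀ A : C, S.obj A ⟶ S.obj (A ⊞ A)
  natural : ∀ {A B : C} (f : A ⟶ B), S.map f ≫ d B = d A ≫ S.map (biprod.map f f)
  dc1 : ∀ A : C, d A ≫ S.map biprod.fst = 0
  dc2 : ∀ A : C,
    d A ≫ S.map (biprod.lift biprod.fst (biprod.lift biprod.snd biprod.snd)) =
      d A ≫ S.map (biprod.lift biprod.fst (biprod.lift biprod.snd 0)) +
      d A ≫ S.map (biprod.lift biprod.fst (biprod.lift 0 biprod.snd))
  dc3 : ∀ A : C, S.η.app A ≫ d A = biprod.lift 0 (𝟙 A) ≫ S.η.app (A ⊞ A)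
  dc4 : ∀ A : C, S.μ.app A ≫ d A =
    d (S.obj A) ≫
      S.map (biprod.fst ≫ S.map (biprod.lift (𝟙 A) 0) + biprod.snd ≫ d A) ≫
      S.μ.app (A ⊞ A)
  dc5 : ∀ A : C, d A ≫ d (A ⊞ A) ≫
      S.map (biprod.lift (biprod.fst ≫ biprod.fst) (biprod.snd ≫ biprod.snd)) = d A
  dc6 : ∀ A : C, d A ≫ d (A ⊞ A) ≫
      S.map (biprod.lift
        (biprod.lift (biprod.fst ≫ biprod.fst) (biprod.snd ≫ biprod.fst))
        (biprod.lift (biprod.fst ≫ biprod.snd) (biprod.snd ≫ biprod.snd))) =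
      d A ≫ d (A ⊞ A)

/-- `λ_A := ⟨S(π₁), S(π₁+π₄) ∘ ∂_{A×A}⟩ : S(A×A) ⟶ S(A) × S(A)`. -/
noncomputable def lamOf (S : Monad C) (p : DiffCombTrans S) (A : C) :
    S.obj (A ⊞ A) ⟶ S.obj A ⊞ S.obj A :=
  biprod.lift (S.map biprod.fst)
    (p.d (A ⊞ A) ≫ S.map (biprod.fst ≫ biprod.fst + biprod.snd ≫ biprod.snd))

/-- the vertical lift `⟨π₁,0,0,π₂⟩ : X × X ⟶ (X × X) × (X × X)`. -/
noncomputable def vertLift (X : C) : X ⊞ X ⟶ (X ⊞ X) ⊞ (X ⊞ X) :=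
  biprod.lift (biprod.lift biprod.fst 0) (biprod.lift 0 biprod.snd)

/-- the canonical flip `⟨π₁,π₃,π₂,π₄⟩ : (X × X) × (X × X) ⟶ (X × X) × (X × X)`. -/
noncomputable def canFlip (X : C) : (X ⊞ X) ⊞ (X ⊞ X) ⟶ (X ⊞ X) ⊞ (X ⊞ X) :=
  biprod.lift (biprod.lift (biprod.fst ≫ biprod.fst) (biprod.snd ≫ biprod.fst))
    (biprod.lift (biprod.fst ≫ biprod.snd) (biprod.snd ≫ biprod.snd))

/-- A `𝔹`-distributive law for a monad `S`. -/
structure BDistLaw (S : Monad C) where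
  lam : ∀ A : C, S.obj (A ⊞ A) ⟶ S.obj A ⊞ S.obj A
  natural : ∀ {A B : C} (f : A ⟶ B),
    S.map (biprod.map f f) ≫ lam B = lam A ≫ biprod.map (S.map f) (S.map f)
  comm_mu : ∀ A : C, S.μ.app (A ⊞ A) ≫ lam A =
    S.map (lam A) ≫ lam (S.obj A) ≫ biprod.map (S.μ.app A) (S.μ.app A)
  comm_eta : ∀ A : C, S.η.app (A ⊞ A) ≫ lam A = biprod.map (S.η.app A) (S.η.app A)
  proj : ∀ A : C, lam A ≫ biprod.fst = S.map biprod.fst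
  zero : ∀ A : C, S.map (biprod.lift (𝟙 A) 0) ≫ lam A = biprod.lift (𝟙 (S.obj A)) 0
  sum : ∀ A : C, S.map (biprod.lift biprod.fst
      (biprod.snd ≫ biprod.fst + biprod.snd ≫ biprod.snd)) ≫ lam A =
    biprod.lift (S.map biprod.fst)
      (S.map (biprod.lift biprod.fst (biprod.snd ≫ biprod.fst)) ≫ lam A ≫ biprod.snd +
        S.map (biprod.lift biprod.fst (biprod.snd ≫ biprod.snd)) ≫ lam A ≫ biprod.snd)
  vlift : ∀ A : C, lam A ≫ vertLift (S.obj A) =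
    S.map (vertLift A) ≫ lam (A ⊞ A) ≫ biprod.map (lam A) (lam A)
  cflip : ∀ A : C, lam (A ⊞ A) ≫ biprod.map (lam A) (lam A) ≫ canFlip (S.obj A) =
    S.map (canFlip A) ≫ lam (A ⊞ A) ≫ biprod.map (lam A) (lam A)

/-- `∂_A := π₂ ∘ λ_{A×A} ∘ S(⟨1_A,0,0,1_A⟩) : S(A) ⟶ S(A×A)`. -/
noncomputable def partialOf (S : Monad C) (l : BDistLaw S) (A : C) :
    S.obj A ⟶ S.obj (A ⊞ A) :=
  S.map (biprod.lift (biprod.lift (𝟙 A) 0) (biprod.lift 0 (𝟙 A))) ≫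
    l.lam (A ⊞ A) ≫ biprod.snd


namespace DiffAux

@[simp] lemma comp_lift {Z X A B : C} (h : Z ⟶ X) (f : X ⟶ A) (g : X ⟶ B) :
    h ≫ biprod.lift f g = biprod.lift (h ≫ f) (h ≫ g) := by
  apply biprod.hom_ext <;> simp

@[simp] lemma lift_zero_zero {X A B : C} : biprod.lift (0 : X ⟶ A) (0 : X ⟶ B) = 0 := by
  apply biprod.hom_ext <;> simp

lemma lift_add {X A B : C} (f g : X ⟶ A) (h k : X ⟶ B) :
    biprod.lift (f + g) (h + k) = biprod.lift f h + biprod.lift g k := by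
  apply biprod.hom_ext <;> simp

variable {S : Monad C}

/-! ### Direction F : from differential combinator transformations to distributive laws -/

lemma dc1' (p : DiffCombTrans S) {X B : C} (α : X ⟶ B) :
    p.d X ≫ S.map (biprod.fst ≫ α) = 0 := by
  rw [Functor.map_comp, ← Category.assoc, p.dc1, zero_comp]

lemma dc2' (p : DiffCombTrans S) {X B : C} (α β γ : X ⟶ B) :
    p.d X ≫ S.map (biprod.fst ≫ α + biprod.snd ≫ β + biprod.snd ≫ γ) =
      p.d X ≫ S.map (biprod.fst ≫ α + biprod.snd ≫ β) +
      p.d X ≫ S.map (biprod.fst ≫ α + biprod.snd ≫ γ) := by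
  have key := congrArg (fun t => t ≫ S.map
    (biprod.fst ≫ α + biprod.snd ≫ biprod.fst ≫ β + biprod.snd ≫ biprod.snd ≫ γ :
      X ⊞ (X ⊞ X) ⟶ B)) (p.dc2 X)
  simp only [Preadditive.add_comp, Category.assoc, ← Functor.map_comp] at key
  have e0 : (biprod.lift biprod.fst (biprod.lift biprod.snd biprod.snd) : X ⊞ X ⟶ X ⊞ (X ⊞ X)) ≫
      (biprod.fst ≫ α + biprod.snd ≫ biprod.fst ≫ β + biprod.snd ≫ biprod.snd ≫ γ) =
      biprod.fst ≫ α + biprod.snd ≫ β + biprod.snd ≫ γ := by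
    simp
  have e1 : (biprod.lift biprod.fst (biprod.lift biprod.snd 0) : X ⊞ X ⟶ X ⊞ (X ⊞ X)) ≫
      (biprod.fst ≫ α + biprod.snd ≫ biprod.fst ≫ β + biprod.snd ≫ biprod.snd ≫ γ) =
      biprod.fst ≫ α + biprod.snd ≫ β := by
    simp
  have e2 : (biprod.lift biprod.fst (biprod.lift 0 biprod.snd) : X ⊞ X ⟶ X ⊞ (X ⊞ X)) ≫
      (biprod.fst ≫ α + biprod.snd ≫ biprod.fst ≫ β + biprod.snd ≫ biprod.snd ≫ γ) =
      biprod.fst ≫ α + biprod.snd ≫ γ := by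
    simp
  rw [e0, e1, e2] at key
  exact key

lemma lamOf_fst (p : DiffCombTrans S) (A : C) :
    lamOf S p A ≫ biprod.fst = S.map biprod.fst := biprod.lift_fst _ _

lemma lamOf_snd (p : DiffCombTrans S) (A : C) :
    lamOf S p A ≫ biprod.snd =
      p.d (A ⊞ A) ≫ S.map (biprod.fst ≫ biprod.fst + biprod.snd ≫ biprod.snd) :=
  biprod.lift_snd _ _

lemma eta_nat {A B : C} (f : A ⟶ B) : S.η.app A ≫ S.map f = f ≫ S.η.app B := by
  simpa using (S.η.naturality f).symm

lemma mu_nat {A B : C} (f : A ⟶ B) :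
    S.μ.app A ≫ S.map f = S.map (S.map f) ≫ S.μ.app B := by
  simpa using (S.μ.naturality f).symm

lemma lamOf_fst_assoc (p : DiffCombTrans S) (A : C) {Z : C} (k : S.obj A ⟶ Z) :
    lamOf S p A ≫ biprod.fst ≫ k = S.map biprod.fst ≫ k := by
  rw [← Category.assoc, lamOf_fst]

lemma lamOf_snd_assoc (p : DiffCombTrans S) (A : C) {Z : C} (k : S.obj A ⟶ Z) :
    lamOf S p A ≫ biprod.snd ≫ k =
      p.d (A ⊞ A) ≫ S.map (biprod.fst ≫ biprod.fst + biprod.snd ≫ biprod.snd) ≫ k := by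
  rw [← Category.assoc, lamOf_snd, Category.assoc]

lemma d_nat (p : DiffCombTrans S) {A B : C} (f : A ⟶ B) {Z : C}
    (k : S.obj (B ⊞ B) ⟶ Z) :
    S.map f ≫ p.d B ≫ k = p.d A ≫ S.map (biprod.map f f) ≫ k := by
  rw [← Category.assoc, p.natural, Category.assoc]

/-- collect `S.map f ≫ d ≫ S.map g` into `d ≫ S.map (...)`. -/
lemma d_nat2 (p : DiffCombTrans S) {A B Z : C} (f : A ⟶ B) (g : B ⊞ B ⟶ Z) :
    S.map f ≫ p.d B ≫ S.map g = p.d A ≫ S.map (biprod.map f f ≫ g) := by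
  rw [← Category.assoc, p.natural, Category.assoc, ← Functor.map_comp]

lemma d_nat3 (p : DiffCombTrans S) {A B Z Z' : C} (f : A ⟶ B) (g : B ⊞ B ⟶ Z)
    (k : S.obj Z ⟶ Z') :
    S.map f ≫ p.d B ≫ S.map g ≫ k = p.d A ≫ S.map (biprod.map f f ≫ g) ≫ k := by
  simp only [← Category.assoc]
  rw [p.natural]
  simp only [Category.assoc, Functor.map_comp]

lemma dc5' (p : DiffCombTrans S) (B : C) {Z : C}
    (k : S.obj (B ⊞ B) ⟶ Z) :
    p.d B ≫ p.d (B ⊞ B) ≫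
      S.map (biprod.lift (biprod.fst ≫ biprod.fst) (biprod.snd ≫ biprod.snd)) ≫ k =
    p.d B ≫ k := by
  have h := congrArg (· ≫ k) (p.dc5 B)
  simpa [Category.assoc] using h

lemma dc6' (p : DiffCombTrans S) (B : C) {Z : C}
    (k : S.obj ((B ⊞ B) ⊞ (B ⊞ B)) ⟶ Z) :
    p.d B ≫ p.d (B ⊞ B) ≫
      S.map (biprod.lift
        (biprod.lift (biprod.fst ≫ biprod.fst) (biprod.snd ≫ biprod.fst))
        (biprod.lift (biprod.fst ≫ biprod.snd) (biprod.snd ≫ biprod.snd))) ≫ k =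
    p.d B ≫ p.d (B ⊞ B) ≫ k := by
  have h := congrArg (· ≫ k) (p.dc6 B)
  simpa [Category.assoc] using h

noncomputable def mkBDist (p : DiffCombTrans S) : BDistLaw S where
  lam := lamOf S p
  natural {A B} f := by
    apply biprod.hom_ext
    · simp only [Category.assoc, lamOf_fst, lamOf_fst_assoc, biprod.map_fst,
        ← Functor.map_comp]
    · simp only [Category.assoc, biprod.map_snd, lamOf_snd, lamOf_snd_assoc]
      rw [d_nat2]
      simp only [← Functor.map_comp]
      congr 2
      apply biprod.hom_ext' <;> simp
  comm_mu A := by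
    apply biprod.hom_ext
    · simp only [Category.assoc, lamOf_fst, lamOf_fst_assoc, biprod.map_fst]
      rw [mu_nat, ← Functor.map_comp_assoc, lamOf_fst]
    · simp only [Category.assoc, biprod.map_snd, lamOf_snd, lamOf_snd_assoc]
      rw [← Category.assoc, p.dc4 (A ⊞ A), Category.assoc, Category.assoc, mu_nat,
        d_nat3, ← Functor.map_comp_assoc]
      congr 3
      apply biprod.hom_ext' <;> simp [lamOf, ← Functor.map_comp]
  comm_eta A := by
    apply biprod.hom_ext
    · simp only [Category.assoc, lamOf_fst, biprod.map_fst]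
      exact eta_nat _
    · simp only [Category.assoc, biprod.map_snd, lamOf_snd]
      rw [← Category.assoc, p.dc3 (A ⊞ A), Category.assoc, eta_nat, ← Category.assoc]
      congr 1
      simp
  proj A := lamOf_fst p A
  zero A := by
    apply biprod.hom_ext
    · simp only [Category.assoc, lamOf_fst, ← Functor.map_comp]
      simp
    · simp only [Category.assoc, lamOf_snd, biprod.lift_snd]
      rw [d_nat2]
      rw [show (biprod.map (biprod.lift (𝟙 A) 0) (biprod.lift (𝟙 A) 0)) ≫
          (biprod.fst ≫ biprod.fst + biprod.snd ≫ biprod.snd :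
            (A ⊞ A) ⊞ (A ⊞ A) ⟶ A) = biprod.fst ≫ 𝟙 A from by simp]
      exact dc1' p (𝟙 A)
  sum A := by
    apply biprod.hom_ext
    · simp only [Category.assoc, lamOf_fst, ← Functor.map_comp]
      simp
    · simp only [Category.assoc, biprod.lift_snd, lamOf_snd, lamOf_snd_assoc]
      rw [d_nat2]
      rw [show (biprod.map (biprod.lift biprod.fst
              (biprod.snd ≫ biprod.fst + biprod.snd ≫ biprod.snd))
            (biprod.lift biprod.fst (biprod.snd ≫ biprod.fst + biprod.snd ≫ biprod.snd)) ≫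
            (biprod.fst ≫ biprod.fst + biprod.snd ≫ biprod.snd :
              (A ⊞ A) ⊞ (A ⊞ A) ⟶ A) :
            (A ⊞ (A ⊞ A)) ⊞ (A ⊞ (A ⊞ A)) ⟶ A) =
          biprod.fst ≫ biprod.fst + biprod.snd ≫ (biprod.snd ≫ biprod.fst) +
            biprod.snd ≫ (biprod.snd ≫ biprod.snd) from by simp; abel]
      rw [dc2' p]
      congr 1 <;> · rw [d_nat2]; congr 2; simp
  vlift A := by
    apply biprod.hom_ext <;> apply biprod.hom_ext <;>
      simp only [Category.assoc, vertLift, comp_lift, biprod.lift_fst, biprod.lift_snd,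
        biprod.lift_fst_assoc, biprod.lift_snd_assoc, biprod.map_fst, biprod.map_snd,
        biprod.map_fst_assoc, biprod.map_snd_assoc, comp_zero, zero_comp,
        lamOf_fst, lamOf_snd, lamOf_fst_assoc, lamOf_snd_assoc]
    · -- coordinate (1,1)
      rw [← Functor.map_comp_assoc, ← Functor.map_comp]
      simp
    · -- coordinate (1,2) : both sides zero
      rw [← Functor.map_comp_assoc, d_nat2]
      rw [show ((biprod.lift (biprod.lift (biprod.fst : A ⊞ A ⟶ A) 0)
              (biprod.lift 0 (biprod.snd : A ⊞ A ⟶ A))) ≫ biprod.fst :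
            A ⊞ A ⟶ A ⊞ A) = biprod.lift biprod.fst 0 from by simp]
      rw [show (biprod.map (biprod.lift (biprod.fst : A ⊞ A ⟶ A) 0)
            (biprod.lift (biprod.fst : A ⊞ A ⟶ A) 0) ≫
            (biprod.fst ≫ biprod.fst + biprod.snd ≫ biprod.snd)) =
          biprod.fst ≫ (biprod.fst : A ⊞ A ⟶ A) from by simp]
      rw [dc1' p]
    · -- coordinate (2,1) : both sides zero
      rw [← Functor.map_comp, d_nat2]
      rw [show (biprod.map (biprod.lift (biprod.lift (biprod.fst : A ⊞ A ⟶ A) 0)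
              (biprod.lift 0 (biprod.snd : A ⊞ A ⟶ A)))
            (biprod.lift (biprod.lift (biprod.fst : A ⊞ A ⟶ A) 0)
              (biprod.lift 0 (biprod.snd : A ⊞ A ⟶ A))) ≫
            ((biprod.fst ≫ biprod.fst + biprod.snd ≫ biprod.snd) ≫ biprod.fst)) =
          biprod.fst ≫ ((biprod.fst : A ⊞ A ⟶ A) ≫ 𝟙 A) from by simp]
      rw [dc1' p]
    · -- coordinate (2,2)
      rw [d_nat p, d_nat p, d_nat p]
      simp only [← Functor.map_comp]
      rw [show (biprod.map
            (biprod.map (biprod.lift (biprod.lift (biprod.fst : A ⊞ A ⟶ A) 0)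
                (biprod.lift 0 biprod.snd))
              (biprod.lift (biprod.lift (biprod.fst : A ⊞ A ⟶ A) 0)
                (biprod.lift 0 biprod.snd)))
            (biprod.map (biprod.lift (biprod.lift (biprod.fst : A ⊞ A ⟶ A) 0)
                (biprod.lift 0 biprod.snd))
              (biprod.lift (biprod.lift (biprod.fst : A ⊞ A ⟶ A) 0)
                (biprod.lift 0 biprod.snd))) ≫
          biprod.map (biprod.fst ≫ biprod.fst + biprod.snd ≫ biprod.snd)
              (biprod.fst ≫ biprod.fst + biprod.snd ≫ biprod.snd) ≫
            (biprod.fst ≫ biprod.fst + biprod.snd ≫ biprod.snd)) =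
          biprod.lift (biprod.fst ≫ biprod.fst) (biprod.snd ≫ biprod.snd) ≫
            (biprod.fst ≫ biprod.fst + biprod.snd ≫ biprod.snd :
              (A ⊞ A) ⊞ (A ⊞ A) ⟶ A) from by
        simp [Preadditive.comp_add]]
      conv_rhs => rw [Functor.map_comp]
      rw [dc5' p]
  cflip A := by
    apply biprod.hom_ext <;> apply biprod.hom_ext <;>
      simp only [Category.assoc, canFlip, comp_lift, biprod.lift_fst, biprod.lift_snd,
        biprod.lift_fst_assoc, biprod.lift_snd_assoc, biprod.map_fst, biprod.map_snd,
        biprod.map_fst_assoc, biprod.map_snd_assoc, comp_zero, zero_comp,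
        lamOf_fst, lamOf_snd, lamOf_fst_assoc, lamOf_snd_assoc]
    · simp only [← Functor.map_comp]
      congr 1
      simp
    · rw [← Functor.map_comp_assoc, d_nat2 p]
      simp only [← Functor.map_comp]
      congr 2
      simp [Preadditive.comp_add]
    · rw [d_nat2 p, ← Functor.map_comp, d_nat2 p]
      congr 2
      simp [Preadditive.comp_add]
    · rw [d_nat p, d_nat p, d_nat p]
      simp only [← Functor.map_comp]
      rw [show (biprod.map
            (biprod.map (biprod.lift (biprod.lift (biprod.fst ≫ biprod.fst)
                  (biprod.snd ≫ biprod.fst))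
                (biprod.lift (biprod.fst ≫ biprod.snd) (biprod.snd ≫ (biprod.snd : A ⊞ A ⟶ A))))
              (biprod.lift (biprod.lift (biprod.fst ≫ biprod.fst) (biprod.snd ≫ biprod.fst))
                (biprod.lift (biprod.fst ≫ biprod.snd) (biprod.snd ≫ biprod.snd))))
            (biprod.map (biprod.lift (biprod.lift (biprod.fst ≫ biprod.fst)
                  (biprod.snd ≫ biprod.fst))
                (biprod.lift (biprod.fst ≫ biprod.snd) (biprod.snd ≫ biprod.snd)))
              (biprod.lift (biprod.lift (biprod.fst ≫ biprod.fst) (biprod.snd ≫ biprod.fst))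
                (biprod.lift (biprod.fst ≫ biprod.snd) (biprod.snd ≫ biprod.snd)))) ≫
          biprod.map (biprod.fst ≫ biprod.fst + biprod.snd ≫ biprod.snd)
              (biprod.fst ≫ biprod.fst + biprod.snd ≫ biprod.snd) ≫
            (biprod.fst ≫ biprod.fst + biprod.snd ≫ biprod.snd)) =
          biprod.lift (biprod.lift (biprod.fst ≫ biprod.fst) (biprod.snd ≫ biprod.fst))
              (biprod.lift (biprod.fst ≫ biprod.snd) (biprod.snd ≫ biprod.snd)) ≫
            (biprod.map (biprod.fst ≫ biprod.fst + biprod.snd ≫ biprod.snd)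
                (biprod.fst ≫ biprod.fst + biprod.snd ≫ biprod.snd) ≫
              (biprod.fst ≫ biprod.fst + biprod.snd ≫ biprod.snd)) from by
        simp [Preadditive.comp_add]
        try abel]
      conv_rhs => rw [Functor.map_comp]
      rw [dc6' p]

/-! ### Direction G : from distributive laws to differential combinator transformations -/

@[simp] lemma lift_comp_map {Z X X' A B : C} (f : Z ⟶ X) (g : Z ⟶ X')
    (h : X ⟶ A) (k : X' ⟶ B) :
    biprod.lift f g ≫ biprod.map h k = biprod.lift (f ≫ h) (g ≫ k) := by
  apply biprod.hom_ext <;> simp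

@[simp] lemma add_lift {Z A B : C} (f g : Z ⟶ A) (h k : Z ⟶ B) :
    biprod.lift f h + biprod.lift g k = biprod.lift (f + g) (h + k) := by
  apply biprod.hom_ext <;> simp

lemma lam_snd_map (l : BDistLaw S) {B B' : C} (f : B ⟶ B') :
    l.lam B ≫ biprod.snd ≫ S.map f = S.map (biprod.map f f) ≫ l.lam B' ≫ biprod.snd := by
  rw [← biprod.map_snd (S.map f) (S.map f), ← Category.assoc, ← l.natural, Category.assoc]

lemma lam_snd_map' (l : BDistLaw S) {B B' : C} (f : B ⟶ B') {Z : C}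
    (k : S.obj B' ⟶ Z) :
    l.lam B ≫ biprod.snd ≫ S.map f ≫ k =
      S.map (biprod.map f f) ≫ l.lam B' ≫ biprod.snd ≫ k := by
  have h := congrArg (· ≫ k) (lam_snd_map l f)
  simpa [Category.assoc] using h

lemma iot_lam (l : BDistLaw S) (A : C) :
    S.map (biprod.lift (biprod.lift (𝟙 A) 0) (biprod.lift 0 (𝟙 A))) ≫ l.lam (A ⊞ A) =
      biprod.lift (S.map (biprod.lift (𝟙 A) 0)) (partialOf S l A) := by
  apply biprod.hom_ext
  · rw [Category.assoc, l.proj, ← Functor.map_comp, biprod.lift_fst, biprod.lift_fst]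
  · rw [Category.assoc, biprod.lift_snd, partialOf]

lemma zero' (l : BDistLaw S) {Z A : C} (f : Z ⟶ A) :
    S.map (biprod.lift f 0) ≫ l.lam A ≫ biprod.snd = 0 := by
  rw [show (biprod.lift f (0 : Z ⟶ A)) = f ≫ biprod.lift (𝟙 A) 0 from by simp,
    Functor.map_comp, Category.assoc, ← Category.assoc (S.map (biprod.lift (𝟙 A) 0)),
    l.zero]
  simp

lemma sum' (l : BDistLaw S) {Z Y : C} (r₁ r₂ r₃ : Z ⟶ Y) :
    S.map (biprod.lift r₁ (r₂ + r₃)) ≫ l.lam Y ≫ biprod.snd =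
      S.map (biprod.lift r₁ r₂) ≫ l.lam Y ≫ biprod.snd +
      S.map (biprod.lift r₁ r₃) ≫ l.lam Y ≫ biprod.snd := by
  have key := congrArg
    (fun t => S.map (biprod.lift r₁ (biprod.lift r₂ r₃)) ≫ t ≫ biprod.snd) (l.sum Y)
  simp only [Category.assoc, biprod.lift_snd, Preadditive.comp_add,
    ← Functor.map_comp_assoc] at key
  simp only [comp_lift, Preadditive.comp_add, biprod.lift_fst, biprod.lift_snd,
    biprod.lift_fst_assoc, biprod.lift_snd_assoc, Category.assoc] at key
  exact key

noncomputable def mkDiff (l : BDistLaw S) : DiffCombTrans S where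
  d := partialOf S l
  natural {A B} f := by
    rw [partialOf, partialOf, ← Functor.map_comp_assoc]
    rw [show f ≫ biprod.lift (biprod.lift (𝟙 B) 0) (biprod.lift 0 (𝟙 B)) =
        biprod.lift (biprod.lift (𝟙 A) 0) (biprod.lift 0 (𝟙 A)) ≫
          biprod.map (biprod.map f f) (biprod.map f f) from by
      apply biprod.hom_ext <;> simp]
    rw [Functor.map_comp]
    simp only [Category.assoc]
    rw [lam_snd_map l (biprod.map f f)]
  dc1 A := by
    rw [partialOf]
    simp only [Category.assoc]
    rw [lam_snd_map l (biprod.fst : A ⊞ A ⟶ A), ← Functor.map_comp_assoc]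
    rw [show biprod.lift (biprod.lift (𝟙 A) 0) (biprod.lift 0 (𝟙 A)) ≫
        biprod.map biprod.fst biprod.fst = biprod.lift (𝟙 A) 0 from by
      apply biprod.hom_ext <;> simp]
    exact zero' l _
  dc2 A := by
    rw [partialOf]
    simp only [Category.assoc]
    rw [lam_snd_map l (biprod.lift biprod.fst (biprod.lift biprod.snd biprod.snd)),
      lam_snd_map l (biprod.lift biprod.fst (biprod.lift biprod.snd 0)),
      lam_snd_map l (biprod.lift biprod.fst (biprod.lift 0 biprod.snd))]
    simp only [← Functor.map_comp_assoc]
    rw [show biprod.lift (biprod.lift (𝟙 A) 0) (biprod.lift 0 (𝟙 A)) ≫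
          biprod.map (biprod.lift biprod.fst (biprod.lift biprod.snd biprod.snd))
            (biprod.lift biprod.fst (biprod.lift biprod.snd biprod.snd)) =
        biprod.lift (biprod.lift (𝟙 A) (0 : A ⟶ A ⊞ A))
          ((biprod.lift 0 (biprod.lift (𝟙 A) 0)) + (biprod.lift 0 (biprod.lift 0 (𝟙 A))))
        from by apply biprod.hom_ext <;> simp]
    rw [show biprod.lift (biprod.lift (𝟙 A) 0) (biprod.lift 0 (𝟙 A)) ≫
          biprod.map (biprod.lift biprod.fst (biprod.lift biprod.snd 0))
            (biprod.lift biprod.fst (biprod.lift biprod.snd 0)) =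
        biprod.lift (biprod.lift (𝟙 A) (0 : A ⟶ A ⊞ A))
          (biprod.lift 0 (biprod.lift (𝟙 A) 0)) from by apply biprod.hom_ext <;> simp]
    rw [show biprod.lift (biprod.lift (𝟙 A) 0) (biprod.lift 0 (𝟙 A)) ≫
          biprod.map (biprod.lift biprod.fst (biprod.lift 0 biprod.snd))
            (biprod.lift biprod.fst (biprod.lift 0 biprod.snd)) =
        biprod.lift (biprod.lift (𝟙 A) (0 : A ⟶ A ⊞ A))
          (biprod.lift 0 (biprod.lift 0 (𝟙 A))) from by apply biprod.hom_ext <;> simp]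
    exact sum' l _ _ _
  dc3 A := by
    rw [partialOf, ← Category.assoc, ← (S.η.naturality _), Functor.id_map, Category.assoc,
      ← Category.assoc (S.η.app _), l.comm_eta (A ⊞ A)]
    simp
  dc4 A := by
    rw [partialOf, partialOf, ← Category.assoc, mu_nat]
    simp only [Category.assoc]
    have cm := congrArg (· ≫ biprod.snd) (l.comm_mu (A ⊞ A))
    simp only [Category.assoc, biprod.map_snd] at cm
    rw [cm, ← Functor.map_comp_assoc, iot_lam]
    rw [lam_snd_map' l
      (biprod.fst ≫ S.map (biprod.lift (𝟙 A) 0) + biprod.snd ≫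
        (S.map (biprod.lift (biprod.lift (𝟙 A) 0) (biprod.lift 0 (𝟙 A))) ≫
          l.lam (A ⊞ A) ≫ biprod.snd))]
    rw [← Functor.map_comp_assoc]
    rw [show biprod.lift (biprod.lift (𝟙 (S.obj A)) 0) (biprod.lift 0 (𝟙 (S.obj A))) ≫
          biprod.map
            (biprod.fst ≫ S.map (biprod.lift (𝟙 A) 0) + biprod.snd ≫
              (S.map (biprod.lift (biprod.lift (𝟙 A) 0) (biprod.lift 0 (𝟙 A))) ≫
                l.lam (A ⊞ A) ≫ biprod.snd))
            (biprod.fst ≫ S.map (biprod.lift (𝟙 A) 0) + biprod.snd ≫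
              (S.map (biprod.lift (biprod.lift (𝟙 A) 0) (biprod.lift 0 (𝟙 A))) ≫
                l.lam (A ⊞ A) ≫ biprod.snd)) =
        biprod.lift (S.map (biprod.lift (𝟙 A) 0)) (partialOf S l A) from by
      apply biprod.hom_ext <;> simp [partialOf]]
  dc5 A := by
    have hv := congrArg (fun t => t ≫ biprod.snd ≫ biprod.snd) (l.vlift (A ⊞ A))
    simp only [Category.assoc, vertLift, comp_lift, biprod.lift_snd, biprod.lift_snd_assoc,
      biprod.map_snd, biprod.map_snd_assoc, comp_zero, zero_comp] at hv
    rw [partialOf, partialOf]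
    simp only [Category.assoc]
    rw [lam_snd_map l (biprod.lift (biprod.fst ≫ biprod.fst) (biprod.snd ≫ biprod.snd))]
    simp only [← Functor.map_comp_assoc]
    rw [show biprod.lift (biprod.lift (𝟙 (A ⊞ A)) 0) (biprod.lift 0 (𝟙 (A ⊞ A))) ≫
          biprod.map (biprod.lift (biprod.fst ≫ biprod.fst) (biprod.snd ≫ biprod.snd))
            (biprod.lift (biprod.fst ≫ biprod.fst) (biprod.snd ≫ biprod.snd)) =
        biprod.lift (biprod.lift (biprod.fst : A ⊞ A ⟶ A) 0) (biprod.lift 0 biprod.snd)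
        from by apply biprod.hom_ext <;> apply biprod.hom_ext <;> simp]
    rw [lam_snd_map' l
      (biprod.lift (biprod.lift (biprod.fst : A ⊞ A ⟶ A) 0) (biprod.lift 0 biprod.snd))]
    simp only [← Functor.map_comp_assoc]
    rw [show biprod.lift (biprod.lift (𝟙 A) 0) (biprod.lift 0 (𝟙 A)) ≫
          biprod.map
            (biprod.lift (biprod.lift (biprod.fst : A ⊞ A ⟶ A) 0) (biprod.lift 0 biprod.snd))
            (biprod.lift (biprod.lift (biprod.fst : A ⊞ A ⟶ A) 0)
              (biprod.lift 0 biprod.snd)) =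
        biprod.lift (biprod.lift (𝟙 A) 0) (biprod.lift 0 (𝟙 A)) ≫
          biprod.lift (biprod.lift (biprod.fst : (A ⊞ A) ⊞ (A ⊞ A) ⟶ A ⊞ A) 0)
            (biprod.lift 0 biprod.snd)
        from by apply biprod.hom_ext <;> apply biprod.hom_ext <;> simp]
    rw [Functor.map_comp]
    simp only [Category.assoc]
    rw [← hv]
  dc6 A := by
    have hc := congrArg (fun t => t ≫ biprod.snd ≫ biprod.snd)
      (l.cflip ((A ⊞ A) ⊞ (A ⊞ A)))
    simp only [Category.assoc, canFlip, comp_lift, biprod.lift_snd, biprod.lift_snd_assoc,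
      biprod.map_snd, biprod.map_snd_assoc] at hc
    rw [partialOf, partialOf]
    simp only [Category.assoc]
    rw [lam_snd_map l (biprod.lift
        (biprod.lift (biprod.fst ≫ biprod.fst) (biprod.snd ≫ biprod.fst))
        (biprod.lift (biprod.fst ≫ biprod.snd) (biprod.snd ≫ biprod.snd)))]
    simp only [lam_snd_map' l
      (biprod.lift (biprod.lift (𝟙 (A ⊞ A)) 0) (biprod.lift 0 (𝟙 (A ⊞ A))))]
    rw [lam_snd_map' l (biprod.map
        (biprod.lift (biprod.lift (biprod.fst ≫ biprod.fst) (biprod.snd ≫ biprod.fst))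
          (biprod.lift (biprod.fst ≫ biprod.snd) (biprod.snd ≫ biprod.snd)))
        (biprod.lift (biprod.lift (biprod.fst ≫ biprod.fst) (biprod.snd ≫ biprod.fst))
          (biprod.lift (biprod.fst ≫ biprod.snd) (biprod.snd ≫ biprod.snd))))]
    simp only [← Functor.map_comp_assoc]
    rw [show biprod.lift (biprod.lift (𝟙 A) 0) (biprod.lift 0 (𝟙 A)) ≫
          biprod.map (biprod.lift (biprod.lift (𝟙 (A ⊞ A)) 0) (biprod.lift 0 (𝟙 (A ⊞ A))))
            (biprod.lift (biprod.lift (𝟙 (A ⊞ A)) 0) (biprod.lift 0 (𝟙 (A ⊞ A)))) ≫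
          biprod.map (biprod.map
              (biprod.lift (biprod.lift (biprod.fst ≫ biprod.fst) (biprod.snd ≫ biprod.fst))
                (biprod.lift (biprod.fst ≫ biprod.snd) (biprod.snd ≫ biprod.snd)))
              (biprod.lift (biprod.lift (biprod.fst ≫ biprod.fst) (biprod.snd ≫ biprod.fst))
                (biprod.lift (biprod.fst ≫ biprod.snd) (biprod.snd ≫ biprod.snd))))
            (biprod.map
              (biprod.lift (biprod.lift (biprod.fst ≫ biprod.fst) (biprod.snd ≫ biprod.fst))
                (biprod.lift (biprod.fst ≫ biprod.snd) (biprod.snd ≫ biprod.snd)))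
              (biprod.lift (biprod.lift (biprod.fst ≫ biprod.fst) (biprod.snd ≫ biprod.fst))
                (biprod.lift (biprod.fst ≫ biprod.snd) (biprod.snd ≫ biprod.snd)))) =
        (biprod.lift (biprod.lift (𝟙 A) 0) (biprod.lift 0 (𝟙 A)) ≫
          biprod.map (biprod.lift (biprod.lift (𝟙 (A ⊞ A)) 0) (biprod.lift 0 (𝟙 (A ⊞ A))))
            (biprod.lift (biprod.lift (𝟙 (A ⊞ A)) 0) (biprod.lift 0 (𝟙 (A ⊞ A))))) ≫
          biprod.lift
            (biprod.lift (biprod.fst ≫ biprod.fst) (biprod.snd ≫ biprod.fst))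
            (biprod.lift (biprod.fst ≫ biprod.snd) (biprod.snd ≫ biprod.snd))
        from by
          apply biprod.hom_ext <;> apply biprod.hom_ext <;>
            apply biprod.hom_ext <;> apply biprod.hom_ext <;> simp]
    rw [Functor.map_comp]
    simp only [Category.assoc]
    rw [← hc]


lemma diffExt {p q : DiffCombTrans S} (h : p.d = q.d) : p = q := by
  cases p; cases q; cases h; rfl

lemma distExt {k m : BDistLaw S} (h : k.lam = m.lam) : k = m := by
  cases k; cases m; cases h; rfl

lemma mkBDist_lam (p : DiffCombTrans S) (A : C) : (mkBDist p).lam A = lamOf S p A := rfl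

lemma mkDiff_d (l : BDistLaw S) (A : C) : (mkDiff l).d A = partialOf S l A := rfl

lemma roundtrip1 (p : DiffCombTrans S) : mkDiff (mkBDist p) = p := by
  apply diffExt
  funext A
  rw [mkDiff_d, partialOf, mkBDist_lam]
  simp only [Category.assoc, lamOf_snd]
  rw [d_nat2]
  rw [show biprod.map (biprod.lift (biprod.lift (𝟙 A) 0) (biprod.lift 0 (𝟙 A)))
        (biprod.lift (biprod.lift (𝟙 A) 0) (biprod.lift 0 (𝟙 A))) ≫
      (biprod.fst ≫ biprod.fst + biprod.snd ≫ biprod.snd) = 𝟙 (A ⊞ A) from by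
    apply biprod.hom_ext <;> simp]
  simp

lemma roundtrip2 (l : BDistLaw S) : mkBDist (mkDiff l) = l := by
  apply distExt
  funext A
  rw [mkBDist_lam]
  apply biprod.hom_ext
  · rw [lamOf_fst, l.proj]
  · rw [lamOf_snd, mkDiff_d, partialOf]
    simp only [Category.assoc]
    rw [lam_snd_map l (biprod.fst ≫ biprod.fst + biprod.snd ≫ biprod.snd :
        (A ⊞ A) ⊞ (A ⊞ A) ⟶ A)]
    rw [← Functor.map_comp_assoc]
    rw [show biprod.lift (biprod.lift (𝟙 (A ⊞ A)) 0) (biprod.lift 0 (𝟙 (A ⊞ A))) ≫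
        biprod.map (biprod.fst ≫ biprod.fst + biprod.snd ≫ biprod.snd)
          (biprod.fst ≫ biprod.fst + biprod.snd ≫ biprod.snd) = 𝟙 (A ⊞ A)
      from by apply biprod.hom_ext <;> simp]
    simp

end DiffAux

/-- The assignments `∂ ↦ λ^∂` and `λ ↦ ∂^λ` are mutually inverse bijections between
differential combinator transformations and `𝔹`-distributive laws. -/
theorem diffCombTrans_equiv_bDistLaw (S : Monad C) :
    ∃ (F : DiffCombTrans S → BDistLaw S) (G : BDistLaw S → DiffCombTrans S),
      (∀ (p : DiffCombTrans S) (A : C), (F p).lam A = lamOf S p A) ∧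
      (∀ (l : BDistLaw S) (A : C), (G l).d A = partialOf S l A) ∧
      Function.LeftInverse G F ∧ Function.RightInverse G F := by
  exact ⟨DiffAux.mkBDist, DiffAux.mkDiff, fun p A => rfl, fun l A => rfl,
    DiffAux.roundtrip1, DiffAux.roundtrip2⟩
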